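/- For i ≥ 1, the generating function N_i(t) = ∑_{n≥0} |N(i,n)| t^n for pairs of nonintersecting (vicious) walks starting at heights 0 and 2i equals (1 − D(t)^i)/(1 − 4t), where D(t) = C(t) − 1. -/

import Mathlib

open PowerSeries Finset

/-- Generating function of the Catalan numbers `C_n = (1/(n+1))·binom(2n,n)`. -/
noncomputable def catGF : PowerSeries ℚ :=
  PowerSeries.mk fun n => (Nat.choose (2 * n) n : ℚ) / (n + 1)

/-- `D(t) = C(t) - 1`. -/
noncomputable def DGF : PowerSeries ℚ := catGF - 1

/-- A lattice walk of length `n` with steps `±1`. -/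
def IsWalk (n : ℕ) (L : Fin (n + 1) → ℤ) : Prop :=
  ∀ k : Fin n, |L k.succ - L k.castSucc| = 1

/-- Two walks intersect (share a common point at the same time). -/
def Meets {m : ℕ} (L L' : Fin m → ℤ) : Prop := ∃ k, L k = L' k

/-- All triples of walks of length `n` starting at heights `0, 2i, 2i+2j`. -/
def USet (i j n : ℕ) :
    Set ((Fin (n + 1) → ℤ) × (Fin (n + 1) → ℤ) × (Fin (n + 1) → ℤ)) :=
  {T | IsWalk n T.1 ∧ IsWalk n T.2.1 ∧ IsWalk n T.2.2 ∧
    T.1 0 = 0 ∧ T.2.1 0 = 2 * i ∧ T.2.2 0 = 2 * i + 2 * j}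

/-- Triples where `L₁` and `L₂` are nonintersecting. -/
def W12Set (i j n : ℕ) := {T ∈ USet i j n | ¬ Meets T.1 T.2.1}

/-- Triples where `L₂` and `L₃` are nonintersecting. -/
def W23Set (i j n : ℕ) := {T ∈ USet i j n | ¬ Meets T.2.1 T.2.2}

/-- Triples where `L₁` intersects `L₃`. -/
def M13Set (i j n : ℕ) := {T ∈ USet i j n | Meets T.1 T.2.2}

/-- Triples where `L₂` intersects both `L₁` and `L₃`. -/
def M1223Set (i j n : ℕ) :=
  {T ∈ USet i j n | Meets T.2.1 T.1 ∧ Meets T.2.1 T.2.2}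

/-- Vicious (pairwise nonintersecting) triples. -/
def VSet (i j n : ℕ) :=
  {T ∈ USet i j n | ¬ Meets T.1 T.2.1 ∧ ¬ Meets T.2.1 T.2.2 ∧ ¬ Meets T.1 T.2.2}

/-- Pairs of walks of length `n` starting at heights `0` and `2i`. -/
def PairSet (i n : ℕ) : Set ((Fin (n + 1) → ℤ) × (Fin (n + 1) → ℤ)) :=
  {P | IsWalk n P.1 ∧ IsWalk n P.2 ∧ P.1 0 = 0 ∧ P.2 0 = 2 * i}

/-- Intersecting pairs. -/
def MSet (i n : ℕ) := {P ∈ PairSet i n | Meets P.1 P.2}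

/-- Nonintersecting (vicious) pairs. -/
def NSet (i n : ℕ) := {P ∈ PairSet i n | ¬ Meets P.1 P.2}

/-- Converging pairs: never meet before time `n`, meet at time `n`. -/
def TSet (i n : ℕ) :=
  {P ∈ PairSet i n | (∀ k : Fin (n + 1), (k : ℕ) < n → P.1 k ≠ P.2 k) ∧
    P.1 (Fin.last n) = P.2 (Fin.last n)}

/-- 2-watermelons of length `n`. -/
def MelonSet (n : ℕ) : Set ((Fin (n + 1) → ℤ) × (Fin (n + 1) → ℤ)) :=
  {P | IsWalk n P.1 ∧ IsWalk n P.2 ∧ P.1 0 = 0 ∧ P.2 0 = 2 ∧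
    P.2 (Fin.last n) = P.1 (Fin.last n) + 2 ∧ ∀ k, P.1 k < P.2 k}

/-- Partial Dyck paths of length `2n` from height `2i` to `0`, strictly positive before the end. -/
def PDyckSet (i n : ℕ) : Set (Fin (2 * n + 1) → ℤ) :=
  {Q | IsWalk (2 * n) Q ∧ Q 0 = 2 * i ∧ Q (Fin.last (2 * n)) = 0 ∧
    ∀ k : Fin (2 * n + 1), (k : ℕ) < 2 * n → 0 < Q k}

def stepVal (b : Bool) : ℤ := if b then 1 else -1

def wsum {n : ℕ} (a : ℤ) (s : Fin n → ℤ) : ℕ → ℤ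
  | 0 => a
  | k + 1 => wsum a s k + (if h : k < n then s ⟨k, h⟩ else 0)

lemma wsum_zero {n : ℕ} (a : ℤ) (s : Fin n → ℤ) : wsum a s 0 = a := rfl

lemma wsum_succ' {n : ℕ} (a : ℤ) (s : Fin n → ℤ) (k : ℕ) :
    wsum a s (k + 1) = wsum a s k + (if h : k < n then s ⟨k, h⟩ else 0) := rfl

lemma wsum_succ {n : ℕ} (a : ℤ) (s : Fin n → ℤ) (k : ℕ) (h : k < n) :
    wsum a s (k + 1) = wsum a s k + s ⟨k, h⟩ := by
  simp [wsum, h]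

lemma wsum_cons {n : ℕ} (a x : ℤ) (s : Fin n → ℤ) (k : ℕ) :
    wsum a (Fin.cons x s) (k + 1) = wsum (a + x) s k := by
  induction k with
  | zero => simp [wsum]
  | succ k ih =>
    rw [wsum_succ', ih, wsum_succ']
    congr 1
    by_cases h : k < n
    · rw [dif_pos (by omega : k + 1 < n + 1), dif_pos h]
      exact Fin.cons_succ (α := fun _ => ℤ) (i := ⟨k, h⟩) (x := x) (p := s)
    · rw [dif_neg (by omega), dif_neg h]

lemma wsum_snoc {n : ℕ} (a x : ℤ) (s : Fin n → ℤ) (k : ℕ) (hk : k ≤ n) :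
    wsum a (Fin.snoc s x) k = wsum a s k := by
  induction k with
  | zero => rfl
  | succ k ih =>
    have h : k < n := by omega
    rw [wsum_succ _ _ _ (by omega : k < n + 1), wsum_succ _ _ _ h, ih (by omega)]
    congr 1
    simp [Fin.snoc, h]
lemma wsum_snoc_last {n : ℕ} (a x : ℤ) (s : Fin n → ℤ) :
    wsum a (Fin.snoc s x) (n + 1) = wsum a s n + x := by
  rw [wsum_succ _ _ _ (by omega : n < n + 1), wsum_snoc _ _ _ _ le_rfl]
  congr 1
  simp [Fin.snoc]

lemma wsum_sub {n : ℕ} (a b : ℤ) (s t : Fin n → ℤ) (k : ℕ) :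
    wsum a s k - wsum b t k = wsum (a - b) (fun j => s j - t j) k := by
  induction k with
  | zero => rfl
  | succ k ih =>
    by_cases h : k < n
    · rw [wsum_succ _ _ _ h, wsum_succ _ _ _ h, wsum_succ _ _ _ h]; omega
    · simp [wsum, h, ih]

def dstep (c : Bool × Bool) : ℤ := stepVal c.2 - stepVal c.1

def ds {n : ℕ} (s : Fin n → Bool × Bool) : Fin n → ℤ := fun j => dstep (s j)

def walkFn {n : ℕ} (a : ℤ) (s : Fin n → Bool) : Fin (n + 1) → ℤ :=
  fun k => wsum a (fun j => stepVal (s j)) k.val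

lemma walkFn_succ {n : ℕ} (a : ℤ) (s : Fin n → Bool) (k : Fin n) :
    walkFn a s k.succ = walkFn a s k.castSucc + stepVal (s k) := by
  show wsum a _ (k.val + 1) = wsum a _ k.val + _
  rw [wsum_succ _ _ _ k.isLt]

lemma walkFn_isWalk {n : ℕ} (a : ℤ) (s : Fin n → Bool) : IsWalk n (walkFn a s) := by
  intro k
  rw [walkFn_succ]
  simp only [add_sub_cancel_left]
  cases s k <;> simp [stepVal]

lemma stepVal_decide {d : ℤ} (h : |d| = 1) : stepVal (decide (d = 1)) = d := by
  rcases (abs_eq (by norm_num : (0:ℤ) ≤ 1)).mp h with h1 | h1 <;> simp [h1, stepVal]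

def stepsOf {n : ℕ} (L : Fin (n + 1) → ℤ) : Fin n → Bool :=
  fun j => decide (L j.succ - L j.castSucc = 1)

lemma walkFn_of {n : ℕ} (L : Fin (n + 1) → ℤ) (hL : IsWalk n L) :
    ∀ v (h : v ≤ n), wsum (L 0) (fun j => stepVal (stepsOf L j)) v = L ⟨v, by omega⟩ := by
  intro v
  induction v with
  | zero =>
    intro h
    rfl
  | succ v ih =>
    intro h
    have hv : v < n := by omega
    rw [wsum_succ _ _ _ hv, ih (by omega)]
    have := stepVal_decide (hL ⟨v, hv⟩)
    show L ⟨v, _⟩ + stepVal (stepsOf L ⟨v, hv⟩) = L ⟨v + 1, _⟩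
    unfold stepsOf
    rw [this]
    have e1 : (⟨v, hv⟩ : Fin n).succ = ⟨v + 1, by omega⟩ := rfl
    have e2 : (⟨v, hv⟩ : Fin n).castSucc = ⟨v, by omega⟩ := rfl
    rw [e1, e2]
    ring

lemma walkFn_of' {n : ℕ} (L : Fin (n + 1) → ℤ) (hL : IsWalk n L) (k : Fin (n + 1)) :
    walkFn (L 0) (stepsOf L) k = L k := by
  have := walkFn_of L hL k.val (by omega)
  simpa [walkFn] using this

lemma stepsOf_walkFn {n : ℕ} (a : ℤ) (s : Fin n → Bool) : stepsOf (walkFn a s) = s := by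
  funext j
  unfold stepsOf
  rw [walkFn_succ]
  simp only [add_sub_cancel_left]
  cases s j <;> simp [stepVal]

lemma wsum_ds {n : ℕ} (m : ℤ) (s : Fin n → Bool × Bool) (v : ℕ) :
    wsum m (ds s) v =
      wsum m (fun j => stepVal ((s j).2)) v - wsum 0 (fun j => stepVal ((s j).1)) v := by
  rw [wsum_sub]
  simp only [sub_zero]
  rfl

noncomputable def Acard (m : ℤ) (n : ℕ) : ℕ :=
  Nat.card {s : Fin n → Bool × Bool // ∀ v ≤ n, wsum m (ds s) v ≠ 0}

noncomputable def Tcard (m : ℤ) (n : ℕ) : ℕ :=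
  Nat.card {s : Fin n → Bool × Bool // (∀ v < n, wsum m (ds s) v ≠ 0) ∧ wsum m (ds s) n = 0}

def nsetEquiv (i n : ℕ) :
    {s : Fin n → Bool × Bool // ∀ v ≤ n, wsum (2 * i) (ds s) v ≠ 0} ≃ ↥(NSet i n) where
  toFun s := ⟨(walkFn 0 fun j => (s.1 j).1, walkFn (2 * i) fun j => (s.1 j).2), by
    refine ⟨⟨walkFn_isWalk _ _, walkFn_isWalk _ _, rfl, rfl⟩, ?_⟩
    rintro ⟨k, hk⟩
    have h0 := s.2 k.val (by omega)
    rw [wsum_ds] at h0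
    apply h0
    have hk' : walkFn 0 (fun j => (s.1 j).1) k = walkFn (2 * i) (fun j => (s.1 j).2) k := hk
    show walkFn (2 * i) (fun j => (s.1 j).2) k - walkFn 0 (fun j => (s.1 j).1) k = 0
    rw [hk']
    ring⟩
  invFun P := ⟨fun j => (stepsOf P.1.1 j, stepsOf P.1.2 j), by
    obtain ⟨⟨hw1, hw2, h01, h02⟩, hm⟩ := P.2
    intro v hv
    rw [wsum_ds]
    have e1 := walkFn_of P.1.1 hw1 v hv
    have e2 := walkFn_of P.1.2 hw2 v hv
    rw [h01] at e1; rw [h02] at e2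
    show wsum (2 * (i:ℤ)) (fun j => stepVal (stepsOf P.1.2 j)) v -
      wsum 0 (fun j => stepVal (stepsOf P.1.1 j)) v ≠ 0
    rw [e1, e2]
    intro hc
    exact hm ⟨⟨v, by omega⟩, by omega⟩⟩
  left_inv s := by
    ext j
    · show stepsOf (walkFn 0 fun j => (s.1 j).1) j = (s.1 j).1
      rw [stepsOf_walkFn]
    · show stepsOf (walkFn (2 * i) fun j => (s.1 j).2) j = (s.1 j).2
      rw [stepsOf_walkFn]
  right_inv P := by
    obtain ⟨⟨hw1, hw2, h01, h02⟩, hm⟩ := P.2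
    apply Subtype.ext
    apply Prod.ext
    · funext k
      show walkFn 0 (stepsOf P.1.1) k = P.1.1 k
      rw [← h01, walkFn_of' P.1.1 hw1]
    · funext k
      show walkFn (2 * i) (stepsOf P.1.2) k = P.1.2 k
      rw [← h02, walkFn_of' P.1.2 hw2]

lemma nset_card (i n : ℕ) : Nat.card (NSet i n) = Acard (2 * i) n :=
  (Nat.card_congr (nsetEquiv i n)).symm

open scoped Classical

lemma Acard_zero (m : ℤ) (hm : m ≠ 0) : Acard m 0 = 1 := by
  unfold Acard
  rw [Nat.card_eq_one_iff_unique]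
  constructor
  · constructor
    intro s t
    apply Subtype.ext
    funext j
    exact j.elim0
  · exact ⟨⟨fun j => j.elim0, by intro v hv; interval_cases v; exact hm⟩⟩

lemma Tcard_zero_zero : Tcard 0 0 = 1 := by
  unfold Tcard
  rw [Nat.card_eq_one_iff_unique]
  constructor
  · constructor
    intro s t
    apply Subtype.ext
    funext j
    exact j.elim0
  · exact ⟨⟨fun j => j.elim0, by omega, rfl⟩⟩

lemma Tcard_zero_ne (m : ℤ) (hm : m ≠ 0) : Tcard m 0 = 0 := by
  unfold Tcard
  rw [Nat.card_eq_zero]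
  left
  exact ⟨fun s => hm s.2.2⟩

lemma Tcard_ne_zero (n : ℕ) : Tcard 0 (n + 1) = 0 := by
  unfold Tcard
  rw [Nat.card_eq_zero]
  left
  exact ⟨fun s => s.2.1 0 (by omega) rfl⟩

lemma wsum_init {n : ℕ} (m : ℤ) (s : Fin (n + 1) → ℤ) (v : ℕ) (hv : v ≤ n) :
    wsum m (Fin.init s) v = wsum m s v := by
  conv_rhs => rw [← Fin.snoc_init_self s]
  rw [wsum_snoc _ _ _ _ hv]

lemma ds_init {n : ℕ} (s : Fin (n + 1) → Bool × Bool) : ds (Fin.init s) = Fin.init (ds s) := rfl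

lemma ds_snoc {n : ℕ} (t : Fin n → Bool × Bool) (c : Bool × Bool) :
    ds (Fin.snoc t c) = Fin.snoc (ds t) (dstep c) := by
  funext j
  simp only [ds, Fin.snoc]
  split <;> rfl

lemma wsum_tail {n : ℕ} (m : ℤ) (u : Fin (n + 1) → ℤ) (v : ℕ) :
    wsum (m + u 0) (Fin.tail u) v = wsum m u (v + 1) := by
  conv_rhs => rw [← Fin.cons_self_tail u]
  rw [wsum_cons]

lemma card_split (m : ℤ) (n : ℕ) :
    Acard m (n + 1) + Tcard m (n + 1) = 4 * Acard m n := by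
  classical
  have e1 : {s : Fin (n + 1) → Bool × Bool // ∀ v ≤ n, wsum m (ds s) v ≠ 0} ≃
      (Bool × Bool) × {t : Fin n → Bool × Bool // ∀ v ≤ n, wsum m (ds t) v ≠ 0} := by
    refine ⟨fun s => (s.1 (Fin.last n), ⟨Fin.init s.1, ?_⟩),
      fun p => ⟨Fin.snoc p.2.1 p.1, ?_⟩, ?_, ?_⟩
    · intro v hv
      rw [ds_init, wsum_init _ _ _ hv]
      exact s.2 v hv
    · intro v hv
      rw [ds_snoc, wsum_snoc _ _ _ _ hv]
      exact p.2.2 v hv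
    · intro s
      apply Subtype.ext
      exact Fin.snoc_init_self s.1
    · intro p
      refine Prod.ext ?_ (Subtype.ext ?_)
      · simp
      · simp
  have key : Nat.card {s : Fin (n + 1) → Bool × Bool // ∀ v ≤ n, wsum m (ds s) v ≠ 0} =
      4 * Acard m n := by
    rw [Nat.card_congr e1, Nat.card_prod]
    congr 1
    simp [Nat.card_eq_fintype_card]
  rw [← key]
  have e2 : {s : Fin (n + 1) → Bool × Bool // ∀ v ≤ n, wsum m (ds s) v ≠ 0} ≃
      {s : Fin (n + 1) → Bool × Bool //
          (∀ v ≤ n + 1, wsum m (ds s) v ≠ 0) ∨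
          ((∀ v < n + 1, wsum m (ds s) v ≠ 0) ∧ wsum m (ds s) (n + 1) = 0)} := by
    apply Equiv.subtypeEquivRight
    intro s
    constructor
    · intro h
      by_cases h0 : wsum m (ds s) (n + 1) = 0
      · exact Or.inr ⟨fun v hv => h v (by omega), h0⟩
      · refine Or.inl fun v hv => ?_
        rcases Nat.lt_or_ge v (n + 1) with h' | h'
        · exact h v (by omega)
        · have : v = n + 1 := by omega
          rw [this]; exact h0
    · rintro (h | h) v hv
      · exact h v (by omega)
      · exact h.1 v (by omega)
  rw [Nat.card_congr e2,
    Nat.card_congr (subtypeOrEquiv _ _ (by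
      rw [disjoint_iff_inf_le]
      intro s hs
      obtain ⟨h1, h2⟩ := hs
      exact h1 (n + 1) le_rfl h2.2)),
    Nat.card_sum]
  rfl

lemma Tcard_succ (m : ℤ) (hm : m ≠ 0) (n : ℕ) :
    Tcard m (n + 1) = Tcard (m - 2) n + 2 * Tcard m n + Tcard (m + 2) n := by
  classical
  have key : ∀ (s : Fin (n + 1) → Bool × Bool) (v : ℕ),
      wsum (m + dstep (s 0)) (ds (Fin.tail s)) v = wsum m (ds s) (v + 1) := by
    intro s v
    have h1 : ds (Fin.tail s) = Fin.tail (ds s) := rfl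
    have h2 : dstep (s 0) = ds s 0 := rfl
    rw [h1, h2, wsum_tail]
  have e1 : {s : Fin (n + 1) → Bool × Bool //
        (∀ v < n + 1, wsum m (ds s) v ≠ 0) ∧ wsum m (ds s) (n + 1) = 0} ≃
      {p : (Bool × Bool) × (Fin n → Bool × Bool) //
        (∀ v < n, wsum (m + dstep p.1) (ds p.2) v ≠ 0) ∧
          wsum (m + dstep p.1) (ds p.2) n = 0} := by
    refine ⟨fun s => ⟨(s.1 0, Fin.tail s.1), ?_⟩, fun p => ⟨Fin.cons p.1.1 p.1.2, ?_⟩, ?_, ?_⟩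
    · refine ⟨fun v hv => ?_, ?_⟩
      · rw [key]
        exact s.2.1 (v + 1) (by omega)
      · rw [key]
        exact s.2.2
    · have hz : (Fin.cons p.1.1 p.1.2 : Fin (n + 1) → Bool × Bool) 0 = p.1.1 := rfl
      have ht : Fin.tail (Fin.cons p.1.1 p.1.2 : Fin (n + 1) → Bool × Bool) = p.1.2 := by
        funext j
        simp [Fin.tail]
      constructor
      · intro v hv
        match v with
        | 0 => exact hm
        | w + 1 =>
          rw [← key, hz, ht]
          exact p.2.1 w (by omega)
      · rw [← key, hz, ht]
        exact p.2.2
    · intro s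
      apply Subtype.ext
      exact Fin.cons_self_tail s.1
    · intro p
      apply Subtype.ext
      refine Prod.ext rfl ?_
      show Fin.tail (Fin.cons p.1.1 p.1.2 : Fin (n + 1) → Bool × Bool) = p.1.2
      funext j
      simp [Fin.tail]
  have e2 : {p : (Bool × Bool) × (Fin n → Bool × Bool) //
        (∀ v < n, wsum (m + dstep p.1) (ds p.2) v ≠ 0) ∧
          wsum (m + dstep p.1) (ds p.2) n = 0} ≃
      Σ c : Bool × Bool, {t : Fin n → Bool × Bool //
        (∀ v < n, wsum (m + dstep c) (ds t) v ≠ 0) ∧ wsum (m + dstep c) (ds t) n = 0} :=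
    Equiv.subtypeProdEquivSigmaSubtype
      (fun (c : Bool × Bool) (t : Fin n → Bool × Bool) =>
        (∀ v < n, wsum (m + dstep c) (ds t) v ≠ 0) ∧ wsum (m + dstep c) (ds t) n = 0)
  rw [show Tcard m (n + 1) = Nat.card _ from rfl, Nat.card_congr (e1.trans e2)]
  rw [Nat.card_eq_fintype_card, Fintype.card_sigma]
  rw [Fintype.sum_prod_type]
  simp only [Fintype.sum_bool]
  have hc : ∀ c : Bool × Bool, Fintype.card {t : Fin n → Bool × Bool //
      (∀ v < n, wsum (m + dstep c) (ds t) v ≠ 0) ∧ wsum (m + dstep c) (ds t) n = 0} =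
      Tcard (m + dstep c) n := fun c => (Nat.card_eq_fintype_card).symm
  rw [hc, hc, hc, hc]
  have d1 : dstep (true, true) = 0 := rfl
  have d2 : dstep (true, false) = -2 := rfl
  have d3 : dstep (false, true) = 2 := rfl
  have d4 : dstep (false, false) = 0 := rfl
  rw [d1, d2, d3, d4, show m + 0 = m from by ring, show m + -2 = m - 2 from by ring]
  omega

lemma catGF_eq : catGF = PowerSeries.mk fun n => (catalan n : ℚ) := by
  ext n
  simp only [catGF, coeff_mk]
  rw [catalan_eq_centralBinom_div,
    Nat.cast_div (Nat.succ_dvd_centralBinom n) (by positivity)]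
  simp [Nat.centralBinom]

lemma cat_rel : catGF = 1 + X * catGF ^ 2 := by
  rw [catGF_eq]
  ext n
  cases n with
  | zero => simp
  | succ n =>
    rw [map_add, show (X : ℚ⟦X⟧) * (PowerSeries.mk fun n => (catalan n : ℚ)) ^ 2 =
      ((PowerSeries.mk fun n => (catalan n : ℚ)) ^ 2) * X from mul_comm _ _,
      coeff_succ_mul_X]
    rw [pow_two, PowerSeries.coeff_mul]
    simp only [coeff_mk, coeff_one, Nat.succ_ne_zero, if_false, zero_add]
    rw [catalan_succ']
    push_cast
    rfl

lemma D_rel : DGF = X * (1 + DGF) ^ 2 := by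
  have h1 : (1 : ℚ⟦X⟧) + DGF = catGF := by unfold DGF; ring
  rw [h1]
  unfold DGF
  linear_combination cat_rel

lemma constCoeff_D : constantCoeff DGF = 0 := by
  unfold DGF
  rw [map_sub]
  have : constantCoeff catGF = 1 := by
    rw [catGF_eq]
    simp [← coeff_zero_eq_constantCoeff]
  rw [this]
  simp

lemma Dpow_rel (j : ℕ) :
    DGF ^ (j + 1) = X * (DGF ^ j + (DGF ^ (j + 1) + DGF ^ (j + 1)) + DGF ^ (j + 2)) := by
  calc DGF ^ (j + 1) = (X * (1 + DGF) ^ 2) * DGF ^ j := by rw [← D_rel]; ring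
  _ = _ := by ring

lemma c_zero (j : ℕ) : coeff 0 (DGF ^ (j + 1)) = 0 := by
  rw [coeff_zero_eq_constantCoeff, map_pow, constCoeff_D, zero_pow (by omega)]

lemma c_rec (j n : ℕ) :
    coeff (n + 1) (DGF ^ (j + 1)) =
      coeff n (DGF ^ j) + (coeff n (DGF ^ (j + 1)) + coeff n (DGF ^ (j + 1))) +
        coeff n (DGF ^ (j + 2)) := by
  conv_lhs => rw [Dpow_rel j]
  rw [mul_comm (X : ℚ⟦X⟧) _, coeff_succ_mul_X, map_add, map_add, map_add]

lemma T_eq_c : ∀ n i : ℕ, (Tcard (2 * i) n : ℚ) = coeff n (DGF ^ i) := by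
  intro n
  induction n with
  | zero =>
    intro i
    cases i with
    | zero =>
      rw [show ((2 : ℤ) * (0 : ℕ)) = 0 by simp, Tcard_zero_zero]
      simp
    | succ j =>
      rw [Tcard_zero_ne _ (by push_cast; omega), c_zero]
      simp
  | succ n ih =>
    intro i
    cases i with
    | zero =>
      rw [show ((2 : ℤ) * (0 : ℕ)) = 0 by simp, Tcard_ne_zero]
      simp [coeff_one]
    | succ j =>
      have hm : (2 : ℤ) * ((j : ℕ) + 1 : ℕ) ≠ 0 := by push_cast; omega
      rw [Tcard_succ _ hm, c_rec]
      have e1 : (2 : ℤ) * ((j : ℕ) + 1 : ℕ) - 2 = 2 * (j : ℕ) := by push_cast; ring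
      have e2 : (2 : ℤ) * ((j : ℕ) + 1 : ℕ) + 2 = 2 * ((j + 2 : ℕ) : ℕ) := by push_cast; ring
      rw [e1, e2, Nat.cast_add, Nat.cast_add, Nat.cast_mul, ih j, ih (j + 1), ih (j + 2)]
      push_cast
      ring

theorem stmt13 (i : ℕ) (hi : 1 ≤ i) :
    PowerSeries.mk (fun n => (Nat.card (NSet i n) : ℚ)) =
      (1 - DGF ^ i) * (1 - 4 * PowerSeries.X)⁻¹ := by
  obtain ⟨j, rfl⟩ : ∃ j, i = j + 1 := ⟨i - 1, by omega⟩
  have h2i : (2 : ℤ) * ((j + 1 : ℕ) : ℤ) ≠ 0 := by push_cast; omega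
  set f : ℚ⟦X⟧ := PowerSeries.mk fun n => (Nat.card (NSet (j + 1) n) : ℚ) with hf
  have key : f * (1 - 4 * X) = 1 - DGF ^ (j + 1) := by
    have expand : f * (1 - 4 * X) = f - ((f * X + f * X) + (f * X + f * X)) := by ring
    rw [expand]
    ext n
    rw [map_sub, map_add, map_add]
    cases n with
    | zero =>
      rw [coeff_zero_mul_X]
      simp only [add_zero]
      rw [map_sub]
      rw [show coeff 0 f = ((Nat.card (NSet (j + 1) 0) : ℚ)) from coeff_mk _ _]
      rw [nset_card, Acard_zero _ h2i, c_zero j]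
      simp
    | succ n =>
      rw [coeff_succ_mul_X, map_sub]
      rw [show coeff (n + 1) f = ((Nat.card (NSet (j + 1) (n + 1)) : ℚ)) from coeff_mk _ _,
        show coeff n f = ((Nat.card (NSet (j + 1) n) : ℚ)) from coeff_mk _ _]
      rw [nset_card, nset_card]
      have hs := card_split (2 * ((j + 1 : ℕ) : ℤ)) n
      have hT := T_eq_c (n + 1) (j + 1)
      have hs' := congrArg (Nat.cast : ℕ → ℚ) hs
      push_cast at hs'
      rw [coeff_one]
      simp only [Nat.succ_ne_zero, if_false, zero_sub]
      rw [← hT]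
      push_cast
      linarith
  have hc : constantCoeff (1 - 4 * X : ℚ⟦X⟧) ≠ 0 := by
    rw [map_sub, map_one, map_mul]
    simp
  have hu : (1 - 4 * X : ℚ⟦X⟧) * (1 - 4 * X)⁻¹ = 1 := PowerSeries.mul_inv_cancel _ hc
  calc f = f * ((1 - 4 * X) * (1 - 4 * X)⁻¹) := by rw [hu, mul_one]
    _ = (f * (1 - 4 * X)) * (1 - 4 * X)⁻¹ := by ring
    _ = (1 - DGF ^ (j + 1)) * (1 - 4 * X)⁻¹ := by rw [key]
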